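/- Let P ⊆ {0,1}^n and ε > 0 be such that every ε-tester for P requires Ω(n) queries. Then any constant-query PCPP system for P with soundness parameter δ = 1/3 must use a proof string of length Ω(n). -/

import Mathlib

open scoped Classical

/-- The list of oracle answers obtained by running an adaptive querying strategy against
an oracle `f` for a given number of rounds. -/
def runAnswers {D : Type} (f : D → Bool) (qf : List Bool → D) : ℕ → List Bool
  | 0 => []
  | n + 1 => runAnswers f qf n ++ [f (qf (runAnswers f qf n))]

/-- A randomized (possibly adaptive) oracle algorithm over the domain `D`: a distribution
over pairs of a query strategy and an output function on transcripts. -/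
def Algo (D : Type) : Type := PMF ((List Bool → D) × (List Bool → Bool))

/-- The probability that the algorithm `A`, making `q` queries to the oracle `f`,
accepts (outputs `true`). -/
noncomputable def acceptProb {D : Type} (A : Algo D) (q : ℕ) (f : D → Bool) : ENNReal :=
  PMF.map (fun a => a.2 (runAnswers f a.1 q)) A true

/-- `A` is a `q`-query `ε`-tester for the property `P ⊆ {0,1}ⁿ`: it accepts members of
`P` with probability at least `2/3` and rejects inputs at relative Hamming distance
greater than `ε` from `P` with probability at least `2/3`. -/
def IsTester {n : ℕ} (P : Set (Fin n → Bool)) (ε : ℝ) (q : ℕ) (A : Algo (Fin n)) : Prop :=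
  (∀ f ∈ P, 2 / 3 ≤ acceptProb A q f) ∧
  (∀ f : Fin n → Bool, (∀ g ∈ P, ε * n < (hammingDist f g : ℝ)) →
    acceptProb A q f ≤ 1 / 3)

/-- `V` is a `q`-query PCPP verifier for `P ⊆ {0,1}ⁿ` with proof length `t`, detection
radius `ε` and soundness `1/3`: the verifier has oracle access to the input concatenated
with a proof string; inputs in `P` have a proof accepted with probability `1`, and for
inputs `ε`-far from `P` every proof is rejected with probability greater than `1/3`. -/
def IsPCPP {n t : ℕ} (P : Set (Fin n → Bool)) (ε : ℝ) (q : ℕ)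
    (V : Algo (Fin n ⊕ Fin t)) : Prop :=
  (∀ x ∈ P, ∃ π : Fin t → Bool, acceptProb V q (Sum.elim x π) = 1) ∧
  (∀ x : Fin n → Bool, (∀ g ∈ P, ε * n < (hammingDist x g : ℝ)) →
    ∀ π : Fin t → Bool, acceptProb V q (Sum.elim x π) < 2 / 3)


noncomputable section
namespace Stmt8Aux

/-- probability of an event under a PMF -/
noncomputable def prE {S : Type*} (p : PMF S) (E : S → Prop) : ENNReal :=
  ∑' a, if E a then p a else 0

theorem prE_mono {S : Type*} (p : PMF S) {E F : S → Prop}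
    (h : ∀ a, p a ≠ 0 → E a → F a) : prE p E ≤ prE p F := by
  refine ENNReal.tsum_le_tsum fun a => ?_
  by_cases hE : E a
  · by_cases hp : p a = 0
    · simp [hE, hp]
    · simp [hE, h a hp hE]
  · simp [hE]

theorem prE_congr {S : Type*} (p : PMF S) {E F : S → Prop}
    (h : ∀ a, p a ≠ 0 → (E a ↔ F a)) : prE p E = prE p F :=
  le_antisymm (prE_mono p fun a hp hE => (h a hp).1 hE)
    (prE_mono p fun a hp hF => (h a hp).2 hF)

theorem prE_pure {S : Type*} (a : S) (E : S → Prop) :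
    prE (PMF.pure a) E = if E a then 1 else 0 := by
  unfold prE
  have h1 : ∀ b, (if E b then (PMF.pure a) b else 0)
      = if b = a then (if E a then 1 else 0) else 0 := by
    intro b
    by_cases hb : b = a
    · subst hb; simp [PMF.pure_apply]
    · simp [PMF.pure_apply, hb]
  rw [tsum_congr h1, tsum_ite_eq]

theorem prE_map {S T : Type*} (p : PMF S) (f : S → T) (E : T → Prop) :
    prE (p.map f) E = prE p (fun a => E (f a)) := by
  unfold prE
  simp only [PMF.map_apply]
  have h1 : ∀ b : T, (if E b then (∑' a, if b = f a then p a else 0) else 0)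
      = ∑' a, if b = f a then (if E (f a) then p a else 0) else 0 := by
    intro b
    by_cases hE : E b
    · rw [if_pos hE]
      refine tsum_congr fun a => ?_
      by_cases hb : b = f a
      · subst hb; simp [hE]
      · simp [hb]
    · rw [if_neg hE]
      symm
      rw [ENNReal.tsum_eq_zero]
      intro a
      by_cases hb : b = f a
      · subst hb; simp [hE]
      · simp [hb]
  rw [tsum_congr h1, ENNReal.tsum_comm]
  refine tsum_congr fun a => ?_
  exact tsum_ite_eq (f a) _

theorem prE_bind {S T : Type*} (p : PMF S) (g : S → PMF T) (E : T → Prop) :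
    prE (p.bind g) E = ∑' s, p s * prE (g s) E := by
  unfold prE
  simp only [PMF.bind_apply]
  have h1 : ∀ b : T, (if E b then (∑' s, p s * g s b) else 0)
      = ∑' s, p s * (if E b then g s b else 0) := by
    intro b
    by_cases hE : E b <;> simp [hE]
  rw [tsum_congr h1, ENNReal.tsum_comm]
  exact tsum_congr fun s => ENNReal.tsum_mul_left

noncomputable def pmfVec {S : Type*} (p : PMF S) : ℕ → PMF (List S)
  | 0 => PMF.pure []
  | (m+1) => p.bind fun s => (pmfVec p m).map (s :: ·)

theorem pmfVec_length {S : Type*} (p : PMF S) :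
    ∀ k (ℓ : List S), (pmfVec p k) ℓ ≠ 0 → ℓ.length = k := by
  intro k
  induction k with
  | zero =>
    intro ℓ h
    rw [← PMF.mem_support_iff, pmfVec, PMF.support_pure] at h
    simp only [Set.mem_singleton_iff] at h
    simp [h]
  | succ m ih =>
    intro ℓ h
    rw [← PMF.mem_support_iff, pmfVec, PMF.support_bind] at h
    simp only [Set.mem_iUnion, PMF.support_map, Set.mem_image] at h
    obtain ⟨s, _, a, ha, rfl⟩ := h
    simp [ih a ((PMF.mem_support_iff _ _).mp ha)]

theorem prE_and_const {S : Type*} (p : PMF S) (C : Prop) (A : S → Prop) :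
    prE p (fun a => C ∧ A a) = if C then prE p A else 0 := by
  by_cases hC : C <;> simp [prE, hC]

theorem prE_vec_all {S : Type*} (p : PMF S) (Q : S → Prop) :
    ∀ k, prE (pmfVec p k) (fun ℓ => ∀ s ∈ ℓ, Q s) = (prE p Q) ^ k := by
  intro k
  induction k with
  | zero => simp [pmfVec, prE_pure]
  | succ m ih =>
    rw [pmfVec, prE_bind]
    have h1 : ∀ s, prE ((pmfVec p m).map (s :: ·)) (fun ℓ => ∀ x ∈ ℓ, Q x)
        = if Q s then (prE p Q) ^ m else 0 := by
      intro s
      rw [prE_map]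
      have : prE (pmfVec p m) (fun a => ∀ x ∈ s :: a, Q x)
          = prE (pmfVec p m) (fun a => Q s ∧ ∀ x ∈ a, Q x) :=
        prE_congr _ fun a _ => List.forall_mem_cons
      rw [this, prE_and_const]
      split_ifs with h
      · rw [ih]
      · rfl
    calc ∑' s, p s * prE ((pmfVec p m).map (s :: ·)) (fun ℓ => ∀ x ∈ ℓ, Q x)
        = ∑' s, (if Q s then p s else 0) * (prE p Q) ^ m := by
          refine tsum_congr fun s => ?_
          rw [h1 s]
          by_cases hQ : Q s <;> simp [hQ]
      _ = prE p Q * (prE p Q) ^ m := by rw [ENNReal.tsum_mul_right]; rfl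
      _ = (prE p Q) ^ (m + 1) := by rw [pow_succ, mul_comm]

theorem prE_exists_le {S ι : Type*} [Fintype ι] (p : PMF S) (F : ι → S → Prop) :
    prE p (fun a => ∃ i, F i a) ≤ ∑ i : ι, prE p (F i) := by
  have h2 : ∑ i : ι, prE p (F i) = ∑' a, ∑ i : ι, (if F i a then p a else 0) :=
    (Summable.tsum_finsetSum (fun i _ => ENNReal.summable)).symm
  rw [h2]
  refine ENNReal.tsum_le_tsum fun a => ?_
  by_cases hE : ∃ i, F i a
  · obtain ⟨i0, hi0⟩ := hE
    rw [if_pos (⟨i0, hi0⟩ : ∃ i, F i a)]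
    refine le_trans ?_ (Finset.single_le_sum (f := fun i => if F i a then p a else 0)
      (fun i _ => zero_le) (Finset.mem_univ i0))
    show p a ≤ (if F i0 a then p a else 0)
    rw [if_pos hi0]
  · simp [hE]

/-- Injective encoding of boolean strings into naturals. -/
def encS : List Bool → ℕ
  | [] => 0
  | b :: s => 2 * encS s + (if b then 2 else 1)

def decS : ℕ → List Bool
  | 0 => []
  | (m+1) => (decide ((m+1) % 2 = 0)) :: decS (m / 2)
decreasing_by exact Nat.lt_succ_of_le (Nat.div_le_self _ 2)

theorem decS_encS : ∀ s : List Bool, decS (encS s) = s := by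
  intro s
  induction s with
  | nil => simp [encS, decS]
  | cons b s ih =>
    cases b
    · show decS (2 * encS s + 1) = false :: s
      have h1 : 2 * encS s + 1 = (2 * encS s) + 1 := rfl
      rw [h1, decS]
      have h2 : (2 * encS s + 1) % 2 = 1 := by omega
      have h3 : (2 * encS s) / 2 = encS s := by omega
      rw [h2, h3, ih]
      simp
    · show decS (2 * encS s + 2) = true :: s
      have h1 : 2 * encS s + 2 = (2 * encS s + 1) + 1 := rfl
      rw [h1, decS]
      have h2 : (2 * encS s + 1 + 1) % 2 = 0 := by omega
      have h3 : (2 * encS s + 1) / 2 = encS s := by omega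
      rw [h2, h3, ih]
      simp

theorem encS_le : ∀ s : List Bool, encS s ≤ 2 ^ (s.length + 1) - 2 := by
  intro s
  induction s with
  | nil => simp [encS]
  | cons b s ih =>
    show 2 * encS s + (if b then 2 else 1) ≤ 2 ^ (s.length + 1 + 1) - 2
    have h1 : (2:ℕ) ^ (s.length + 1 + 1) = 2 * 2 ^ (s.length + 1) := by
      rw [pow_succ, mul_comm]
    have h2 : (1:ℕ) ≤ 2 ^ (s.length + 1) := Nat.one_le_two_pow
    have h3 : (if b then 2 else 1) ≤ 2 := by cases b <;> simp
    omega

theorem encS_lt {q : ℕ} {s : List Bool} (h : s.length < q) : encS s < 2 ^ q := by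
  have h1 := encS_le s
  have h2 : (2:ℕ) ^ (s.length + 1) ≤ 2 ^ q := Nat.pow_le_pow_right (by norm_num) h
  have h3 : (1:ℕ) ≤ 2 ^ (s.length + 1) := Nat.one_le_two_pow
  omega

theorem runAnswers_length {D : Type} (f : D → Bool) (qf : List Bool → D) :
    ∀ m, (runAnswers f qf m).length = m := by
  intro m
  induction m with
  | zero => rfl
  | succ m ih => simp [runAnswers, ih]

theorem runAnswers_nonadaptive {D : Type} (f : D → Bool) (pf : ℕ → D)
    (qf : List Bool → D) (hq : ∀ ts, qf ts = pf ts.length) :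
    ∀ M, runAnswers f qf M = (List.range M).map (fun r => f (pf r)) := by
  intro M
  induction M with
  | zero => rfl
  | succ M ih =>
    rw [runAnswers, ih, List.range_succ, List.map_append]
    simp [hq, runAnswers_length, ih]

theorem runAnswers_nonadaptive_getD {D : Type} (f : D → Bool) (pf : ℕ → D)
    (qf : List Bool → D) (hq : ∀ ts, qf ts = pf ts.length) {M r : ℕ} (hr : r < M) :
    (runAnswers f qf M).getD r false = f (pf r) := by
  rw [runAnswers_nonadaptive f pf qf hq M]
  have hlen : r < ((List.range M).map (fun r => f (pf r))).length := by
    simpa using hr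
  rw [List.getD_eq_getElem _ _ hlen]
  simp

variable {n t : ℕ}

/-- default verifier sample -/
def dft (d0 : Fin n) : (List Bool → Fin n ⊕ Fin t) × (List Bool → Bool) :=
  (fun _ => Sum.inl d0, fun _ => false)

/-- the (non-adaptive) query position of the tester at query index `r` -/
def posT (d0 : Fin n) (q : ℕ) (ℓ : List ((List Bool → Fin n ⊕ Fin t) × (List Bool → Bool)))
    (r : ℕ) : Fin n :=
  match (ℓ.getD (r / 2 ^ q) (dft d0)).1 (decS (r % 2 ^ q)) with
  | Sum.inl j => j
  | Sum.inr _ => d0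

/-- the tester's querying strategy -/
def stratT (d0 : Fin n) (q : ℕ) (ℓ : List ((List Bool → Fin n ⊕ Fin t) × (List Bool → Bool))) :
    List Bool → Fin n :=
  fun ts => posT d0 q ℓ ts.length

/-- simulated transcript of verifier run `i` with proof `π`, reading input answers off the
tester transcript `ts` -/
def simAns (qv : ℕ) (sf : List Bool → Fin n ⊕ Fin t) (π : Fin t → Bool) (ts : List Bool)
    (i : ℕ) : ℕ → List Bool
  | 0 => []
  | m + 1 =>
    let u := simAns qv sf π ts i m
    u ++ [match sf u with
          | Sum.inl _ => ts.getD (i * 2 ^ qv + encS u) false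
          | Sum.inr j => π j]

/-- the tester's output function -/
noncomputable def outT (d0 : Fin n) (k q : ℕ)
    (ℓ : List ((List Bool → Fin n ⊕ Fin t) × (List Bool → Bool))) (ts : List Bool) : Bool :=
  decide (∃ π : Fin t → Bool, ∀ i < k,
    (ℓ.getD i (dft d0)).2 (simAns q (ℓ.getD i (dft d0)).1 π ts i q) = true)

/-- the tester built from a PCPP verifier -/
noncomputable def tester (d0 : Fin n) (k q : ℕ) (V : Algo (Fin n ⊕ Fin t)) : Algo (Fin n) :=
  PMF.map (fun ℓ => (stratT d0 q ℓ, outT d0 k q ℓ)) (pmfVec V k)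

theorem simAns_eq (d0 : Fin n) (q k : ℕ) (x : Fin n → Bool) (π : Fin t → Bool)
    (ℓ : List ((List Bool → Fin n ⊕ Fin t) × (List Bool → Bool))) {i : ℕ} (hik : i < k) :
    ∀ m ≤ q, simAns q (ℓ.getD i (dft d0)).1 π (runAnswers x (stratT d0 q ℓ) (k * 2 ^ q)) i m
      = runAnswers (Sum.elim x π) (ℓ.getD i (dft d0)).1 m := by
  set sf := (ℓ.getD i (dft d0)).1 with hsf
  set ts := runAnswers x (stratT d0 q ℓ) (k * 2 ^ q) with hts
  intro m
  induction m with
  | zero => intro _; rfl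
  | succ m ih =>
    intro hm
    have hmq : m < q := hm
    have ihm := ih (le_of_lt hmq)
    rw [simAns, runAnswers]
    rw [ihm]
    set u := runAnswers (Sum.elim x π) sf m with hu
    have hulen : u.length = m := runAnswers_length _ _ m
    congr 1
    cases hqu : sf u with
    | inr j => simp [hqu]
    | inl j =>
      simp only [hqu]
      have henc : encS u < 2 ^ q := encS_lt (by omega)
      have hidx : i * 2 ^ q + encS u < k * 2 ^ q := by
        have h1 : i * 2 ^ q + encS u < (i + 1) * 2 ^ q := by
          rw [Nat.succ_mul]; omega
        have h2 : (i + 1) * 2 ^ q ≤ k * 2 ^ q := Nat.mul_le_mul_right _ hik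
        omega
      have hget : ts.getD (i * 2 ^ q + encS u) false
          = x (posT d0 q ℓ (i * 2 ^ q + encS u)) := by
        rw [hts]
        exact runAnswers_nonadaptive_getD x (posT d0 q ℓ) (stratT d0 q ℓ)
          (fun _ => rfl) hidx
      have hdiv : (i * 2 ^ q + encS u) / 2 ^ q = i := by
        rw [add_comm, Nat.add_mul_div_right _ _ (Nat.two_pow_pos q),
          Nat.div_eq_of_lt henc, zero_add]
      have hmod : (i * 2 ^ q + encS u) % 2 ^ q = encS u := by
        rw [add_comm, Nat.add_mul_mod_self_right, Nat.mod_eq_of_lt henc]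
      have hpos : posT d0 q ℓ (i * 2 ^ q + encS u) = j := by
        unfold posT
        rw [hdiv, hmod, decS_encS, ← hsf, hqu]
      rw [hget, hpos]
      simp

theorem tester_accept (d0 : Fin n) (k q : ℕ) (x : Fin n → Bool)
    (ℓ : List ((List Bool → Fin n ⊕ Fin t) × (List Bool → Bool))) :
    outT d0 k q ℓ (runAnswers x (stratT d0 q ℓ) (k * 2 ^ q))
      = decide (∃ π : Fin t → Bool, ∀ i < k,
          (ℓ.getD i (dft d0)).2
            (runAnswers (Sum.elim x π) (ℓ.getD i (dft d0)).1 q) = true) := by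
  unfold outT
  congr 1
  refine propext ?_
  constructor
  · rintro ⟨π, hπ⟩
    exact ⟨π, fun i hi => by rw [← simAns_eq d0 q k x π ℓ hi q le_rfl]; exact hπ i hi⟩
  · rintro ⟨π, hπ⟩
    exact ⟨π, fun i hi => by rw [simAns_eq d0 q k x π ℓ hi q le_rfl]; exact hπ i hi⟩

theorem acceptProb_eq_prE {D : Type} (A : Algo D) (q : ℕ) (f : D → Bool) :
    acceptProb A q f = prE A (fun a => a.2 (runAnswers f a.1 q) = true) := by
  unfold acceptProb prE
  erw [PMF.map_apply]
  refine tsum_congr fun a => ?_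
  by_cases h : a.2 (runAnswers f a.1 q) = true
  · simp [h]
  · simp [h]

theorem acceptProb_tester (d0 : Fin n) (k q : ℕ) (V : Algo (Fin n ⊕ Fin t))
    (x : Fin n → Bool) :
    acceptProb (tester d0 k q V) (k * 2 ^ q) x
      = prE (pmfVec V k) (fun ℓ => ∃ π : Fin t → Bool, ∀ i < k,
          (ℓ.getD i (dft d0)).2
            (runAnswers (Sum.elim x π) (ℓ.getD i (dft d0)).1 q) = true) := by
  unfold acceptProb tester
  rw [PMF.map_comp, PMF.map_apply]
  unfold prE
  refine tsum_congr fun ℓ => ?_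
  have h := tester_accept d0 k q x ℓ
  by_cases hE : ∃ π : Fin t → Bool, ∀ i < k,
      (ℓ.getD i (dft d0)).2 (runAnswers (Sum.elim x π) (ℓ.getD i (dft d0)).1 q) = true
  · rw [if_pos hE]
    have : outT d0 k q ℓ (runAnswers x (stratT d0 q ℓ) (k * 2 ^ q)) = true := by
      rw [h]; exact decide_eq_true hE
    simp [Function.comp, this]
  · rw [if_neg hE]
    have : outT d0 k q ℓ (runAnswers x (stratT d0 q ℓ) (k * 2 ^ q)) = false := by
      rw [h]; exact decide_eq_false hE
    simp [Function.comp, this]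

theorem getD_forall_iff {S : Type*} {k : ℕ} {ℓ : List S} (hlen : ℓ.length = k) (d : S)
    (Q : S → Prop) : (∀ i < k, Q (ℓ.getD i d)) ↔ (∀ s ∈ ℓ, Q s) := by
  constructor
  · intro h s hs
    obtain ⟨i, hi, rfl⟩ := List.mem_iff_getElem.mp hs
    have h2 := h i (by omega)
    rwa [List.getD_eq_getElem ℓ d hi] at h2
  · intro h i hi
    have hi' : i < ℓ.length := by omega
    rw [List.getD_eq_getElem ℓ d hi']
    exact h _ (List.getElem_mem hi')

theorem nat_bound (t : ℕ) : 2 ^ t * 2 ^ (2 * t + 4) * 3 ≤ 3 ^ (2 * t + 4) := by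
  have h1 : 2 ^ t * 2 ^ (2 * t + 4) * 3 = 8 ^ t * 48 := by
    rw [← pow_add, show t + (2 * t + 4) = 3 * t + 4 by ring, pow_add, pow_mul]
    norm_num
    ring
  have h2 : (3:ℕ) ^ (2 * t + 4) = 9 ^ t * 81 := by
    rw [pow_add, pow_mul]
    norm_num
  rw [h1, h2]
  exact Nat.mul_le_mul (Nat.pow_le_pow_left (by norm_num) t) (by norm_num)

theorem bound23 (t : ℕ) : ((2:ENNReal)) ^ t * ((2:ENNReal) / 3) ^ (2 * t + 4) ≤ 1 / 3 := by
  have key : ((2:NNReal)) ^ t * ((2 / 3 : NNReal)) ^ (2 * t + 4) ≤ 1 / 3 := by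
    rw [div_pow, ← mul_div_assoc, div_le_div_iff₀ (by positivity) (by positivity), one_mul]
    exact_mod_cast nat_bound t
  have h23 : ((2 / 3 : NNReal) : ENNReal) = 2 / 3 := by
    rw [ENNReal.coe_div (by norm_num)]; norm_num
  have h13 : ((1 / 3 : NNReal) : ENNReal) = 1 / 3 := by
    rw [ENNReal.coe_div (by norm_num)]; norm_num
  have h2c : ((2:NNReal) : ENNReal) = 2 := by norm_num
  calc (2:ENNReal) ^ t * (2 / 3) ^ (2 * t + 4)
      = (((2:NNReal) ^ t * (2 / 3 : NNReal) ^ (2 * t + 4) : NNReal) : ENNReal) := by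
        rw [ENNReal.coe_mul, ENNReal.coe_pow, ENNReal.coe_pow, h23, h2c]
    _ ≤ ((1 / 3 : NNReal) : ENNReal) := ENNReal.coe_le_coe.mpr key
    _ = 1 / 3 := h13

theorem two_thirds_le_one : (2:ENNReal) / 3 ≤ 1 := by
  have h := ENNReal.div_le_div_right (by norm_num : (2:ENNReal) ≤ 3) 3
  rwa [ENNReal.div_self (by norm_num) (by norm_num)] at h

theorem tester_isTester {n t : ℕ} (d0 : Fin n) (q : ℕ) (V : Algo (Fin n ⊕ Fin t))
    (P : Set (Fin n → Bool)) (ε : ℝ) (hV : IsPCPP P ε q V) :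
    IsTester P ε ((2 * t + 4) * 2 ^ q) (tester d0 (2 * t + 4) q V) := by
  set k := 2 * t + 4 with hk
  constructor
  · intro f hf
    obtain ⟨π₀, hπ₀⟩ := hV.1 f hf
    rw [acceptProb_tester]
    have hall : prE (pmfVec V k)
        (fun ℓ => ∀ s ∈ ℓ, s.2 (runAnswers (Sum.elim f π₀) s.1 q) = true) = 1 := by
      erw [prE_vec_all, ← acceptProb_eq_prE, hπ₀, one_pow]
    have hmono : prE (pmfVec V k)
          (fun ℓ => ∀ s ∈ ℓ, s.2 (runAnswers (Sum.elim f π₀) s.1 q) = true)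
        ≤ prE (pmfVec V k) (fun ℓ => ∃ π : Fin t → Bool, ∀ i < k,
            (ℓ.getD i (dft d0)).2
              (runAnswers (Sum.elim f π) (ℓ.getD i (dft d0)).1 q) = true) := by
      refine prE_mono _ fun ℓ hne hA => ?_
      have hlen := pmfVec_length V k ℓ hne
      exact ⟨π₀, (getD_forall_iff hlen (dft d0) _).mpr hA⟩
    calc (2:ENNReal) / 3 ≤ 1 := two_thirds_le_one
      _ = _ := hall.symm
      _ ≤ _ := hmono
  · intro f hfar
    rw [acceptProb_tester]
    have step1 : prE (pmfVec V k) (fun ℓ => ∃ π : Fin t → Bool, ∀ i < k,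
          (ℓ.getD i (dft d0)).2
            (runAnswers (Sum.elim f π) (ℓ.getD i (dft d0)).1 q) = true)
        ≤ prE (pmfVec V k) (fun ℓ => ∃ π : Fin t → Bool, ∀ s ∈ ℓ,
            s.2 (runAnswers (Sum.elim f π) s.1 q) = true) := by
      refine prE_mono _ fun ℓ hne hA => ?_
      have hlen := pmfVec_length V k ℓ hne
      obtain ⟨π, hπ⟩ := hA
      exact ⟨π, (getD_forall_iff hlen (dft d0) _).mp hπ⟩
    have step2 : prE (pmfVec V k) (fun ℓ => ∃ π : Fin t → Bool, ∀ s ∈ ℓ,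
          s.2 (runAnswers (Sum.elim f π) s.1 q) = true)
        ≤ ∑ π : Fin t → Bool, prE (pmfVec V k)
            (fun ℓ => ∀ s ∈ ℓ, s.2 (runAnswers (Sum.elim f π) s.1 q) = true) :=
      prE_exists_le _ _
    have step3 : ∑ π : Fin t → Bool, prE (pmfVec V k)
          (fun ℓ => ∀ s ∈ ℓ, s.2 (runAnswers (Sum.elim f π) s.1 q) = true)
        ≤ ∑ _π : Fin t → Bool, ((2:ENNReal) / 3) ^ k := by
      refine Finset.sum_le_sum fun π _ => ?_
      erw [prE_vec_all, ← acceptProb_eq_prE]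
      exact pow_le_pow_left₀ (zero_le) (le_of_lt (hV.2 f hfar π)) k
    have step4 : ∑ _π : Fin t → Bool, ((2:ENNReal) / 3) ^ k
        = (2:ENNReal) ^ t * ((2:ENNReal) / 3) ^ k := by
      rw [Finset.sum_const, Finset.card_univ, nsmul_eq_mul]
      congr 1
      rw [Fintype.card_fun]
      simp
    calc prE (pmfVec V k) (fun ℓ => ∃ π : Fin t → Bool, ∀ i < k,
          (ℓ.getD i (dft d0)).2
            (runAnswers (Sum.elim f π) (ℓ.getD i (dft d0)).1 q) = true)
        ≤ _ := step1
      _ ≤ _ := step2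
      _ ≤ _ := step3
      _ = _ := step4
      _ ≤ 1 / 3 := bound23 t

end Stmt8Aux

theorem stmt8 (P : ∀ n : ℕ, Set (Fin n → Bool)) (ε : ℝ) (hε : 0 < ε)
    (hard : ∃ c : ℝ, 0 < c ∧ ∃ N : ℕ, ∀ n ≥ N, ∀ (q : ℕ) (A : Algo (Fin n)),
      IsTester (P n) ε q A → c * n ≤ q) :
    ∀ q : ℕ, ∃ c' : ℝ, 0 < c' ∧ ∃ N' : ℕ, ∀ n ≥ N', ∀ (t : ℕ) (V : Algo (Fin n ⊕ Fin t)),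
      IsPCPP (P n) ε q V → c' * n ≤ t := by
  obtain ⟨c, hc, N, hN⟩ := hard
  intro q
  refine ⟨c / 2 ^ (q + 2), by positivity, max N ⌈(2 ^ (q + 3) : ℝ) / c⌉₊, ?_⟩
  intro n hn t V hV
  have hnN : N ≤ n := le_trans (le_max_left _ _) hn
  have hceil : ⌈(2 ^ (q + 3) : ℝ) / c⌉₊ ≤ n := le_trans (le_max_right _ _) hn
  have hnx : (2 ^ (q + 3) : ℝ) / c ≤ n := le_trans (Nat.le_ceil _) (by exact_mod_cast hceil)
  have hcn : (2:ℝ) ^ (q + 3) ≤ c * n := by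
    rw [div_le_iff₀ hc] at hnx
    linarith
  have hnpos : 0 < n := by
    rcases Nat.eq_zero_or_pos n with h0 | h
    · exfalso
      rw [h0] at hcn
      simp at hcn
      nlinarith [pow_pos (show (0:ℝ) < 2 by norm_num) (q + 3)]
    · exact h
  set d0 : Fin n := ⟨0, hnpos⟩
  have hT := Stmt8Aux.tester_isTester d0 q V (P n) ε hV
  have hq' := hN n hnN ((2 * t + 4) * 2 ^ q) _ hT
  have hcast : (((2 * t + 4) * 2 ^ q : ℕ) : ℝ) = (2 * (t:ℝ) + 4) * 2 ^ q := by
    push_cast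
    ring
  rw [hcast] at hq'
  rw [div_mul_eq_mul_div, div_le_iff₀ (by positivity)]
  have e1 : (2:ℝ) ^ (q + 2) = 4 * 2 ^ q := by rw [pow_add]; ring
  have e2 : (2:ℝ) ^ (q + 3) = 8 * 2 ^ q := by rw [pow_add]; ring
  rw [e1]
  rw [e2] at hcn
  nlinarith [pow_pos (show (0:ℝ) < 2 by norm_num) q]
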